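/- Let T ≥ 0, let X_0,…,X_T and Y_0,…,Y_T be Borel subsets of Euclidean spaces, let O_t : X_t → Y_t be measurable maps, let P_0 be a probability measure on L(X_0), let R_t be a probability measure on L(Y_t) for each t, and for each t ∈ {1,…,T} let g_t : X_{t-1}×X_t → [0,1] be measurable with g_t(x,·) ∈ L(X_t) for every x ∈ X_{t-1}. Define the map ζ : L(X_0) → L(X_0×⋯×X_T) by ζ(f)(x_{0:T}) = f(x_0) ∏_{t=1}^T g_t(x_{t-1},x_t), assumed measurable, and let P_{0:T} = ζ_*P_0. Let R_{0:T} = R_0×⋯×R_T and O = O_0×⋯×O_T : X_0×⋯×X_T → Y_0×⋯×Y_T. For f_0 ∈ L(X_0) and h_t ∈ L(Y_t), write u_{0:T|T}(x) = f_0(x_0) ∏_{t=1}^T g_t(x_{t-1},x_t) ∏_{t=0}^T h_t(O_t(x_t)). Assume the compatibility condition Z := ∫ ‖u_{0:T|T}‖_∞ P_0(df_0) R_0(dh_0)⋯R_T(dh_T) > 0 and the relevant measurability. Then the smoothed outer measure, defined as the outer measure induced by P_{0:T} ⋆ (O*R_{0:T}), satisfies P̄_{0:T|T}(φ) = Z⁻¹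 ∫ ‖φ · u_{0:T|T}‖_∞ P_0(df_0) R_0(dh_0)⋯R_T(dh_T) for every φ ∈ L^∞(X_0×⋯×X_T). -/

import Mathlib

open MeasureTheory
open scoped ENNReal NNReal

/-- A possibility function: a measurable `[0,1]`-valued function with supremum `1`. -/
def IsPossibility {E : Type*} [MeasurableSpace E] (f : E → ℝ) : Prop :=
  Measurable f ∧ (∀ x, f x ∈ Set.Icc (0 : ℝ) 1) ∧ (⨆ x, f x) = 1

/-- The key pointwise supremum identity used in the fusion formula. -/
lemma sup_identity_aux {X : Type*} [Nonempty X] (φ v : X → ℝ)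
    (hφ0 : ∀ x, 0 ≤ φ x) (hv : ∀ x, v x ∈ Set.Icc (0 : ℝ) 1) :
    max (⨆ x, v x) 0 * (⨆ x, φ x * (v x / ⨆ x', v x')) = ⨆ x, φ x * v x := by
  have hbdd : BddAbove (Set.range v) := ⟨1, by rintro y ⟨x, rfl⟩; exact (hv x).2⟩
  have hS0 : 0 ≤ ⨆ x, v x := Real.iSup_nonneg fun x => (hv x).1
  rcases eq_or_lt_of_le hS0 with hS | hS
  · -- sup is zero, so `v ≡ 0`
    have hz : ∀ x, v x = 0 := fun x =>
      le_antisymm (le_trans (le_ciSup hbdd x) hS.ge) (hv x).1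
    have h1 : (⨆ x, φ x * v x) = 0 := by
      simp only [hz, mul_zero]
      exact ciSup_const
    rw [h1, ← hS, max_self, zero_mul]
  · rw [max_eq_left hS0]
    have h2 : (⨆ x, φ x * (v x / ⨆ x', v x')) = ⨆ x, (φ x * v x) * (⨆ x', v x')⁻¹ := by
      congr 1; funext x; rw [div_eq_mul_inv, mul_assoc]
    rw [h2, ← Real.iSup_mul_of_nonneg (inv_nonneg.2 hS0) fun x => φ x * v x,
      mul_comm (⨆ x, φ x * v x) _, ← mul_assoc, mul_inv_cancel₀ hS.ne', one_mul]

/-- Theorem 5.1. When the transitions are single possibility functions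
`Q_t(x, ·) = δ_{g_t(x,·)}`, the smoothed outer measure — induced by the fusion
`P_{0:T} ⋆ (O*R_{0:T})` of the predicted law `P_{0:T} = ζ_*P_0` with the pullback by
`O = O_0 × ⋯ × O_T` of the observed information `R_{0:T} = R_0 × ⋯ × R_T` — satisfies
`P̄_{0:T|T}(φ) = Z⁻¹ ∫ ‖φ · u_{0:T|T}‖_∞ P_0(df_0) R_0(dh_0) ⋯ R_T(dh_T)` where
`u_{0:T|T}(x) = f_0(x_0) ∏_t g_t(x_{t-1}, x_t) ∏_t h_t(O_t(x_t))`. -/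
theorem stmt_7 (T : ℕ) (dX dY : ℕ → ℕ)
    (Xset : ∀ t, Set (EuclideanSpace ℝ (Fin (dX t)))) (hX : ∀ t, MeasurableSet (Xset t))
    (Yset : ∀ t, Set (EuclideanSpace ℝ (Fin (dY t)))) (hY : ∀ t, MeasurableSet (Yset t))
    (O : ∀ t, ↥(Xset t) → ↥(Yset t)) (hO : ∀ t, Measurable (O t))
    (P0 : Measure ((↥(Xset 0)) → ℝ)) [IsProbabilityMeasure P0]
    (hP0 : ∀ᵐ f ∂P0, IsPossibility f)
    (R : ∀ t, Measure ((↥(Yset t)) → ℝ)) [∀ t, IsProbabilityMeasure (R t)]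
    (hR : ∀ t, ∀ᵐ h ∂(R t), IsPossibility h)
    (g : ∀ t : ℕ, ↥(Xset t) → ↥(Xset (t + 1)) → ℝ)
    (hgm : ∀ t < T, Measurable fun q : ↥(Xset t) × ↥(Xset (t + 1)) => g t q.1 q.2)
    (hg01 : ∀ t < T, ∀ x x', g t x x' ∈ Set.Icc (0 : ℝ) 1)
    (hgposs : ∀ t < T, ∀ x, (⨆ x', g t x x') = 1)
    -- the map `ζ` and the predicted law `P_{0:T} = ζ_* P_0`
    (ζ : ((↥(Xset 0)) → ℝ) → (((s : Fin (T + 1)) → ↥(Xset s)) → ℝ))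
    (hζdef : ∀ f x, ζ f x =
      f (x ⟨0, T.succ_pos⟩) * ∏ t : Fin T, g t (x t.castSucc) (x t.succ))
    (hζm : Measurable ζ)
    (P0T : Measure ((((s : Fin (T + 1)) → ↥(Xset s)) → ℝ)))
    (hP0Tdef : P0T = P0.map ζ)
    -- the observed information `R_{0:T} = R_0 × ⋯ × R_T` as a law on `L(Y_0 × ⋯ × Y_T)`
    (RY : Measure ((((s : Fin (T + 1)) → ↥(Yset s)) → ℝ)))
    (hRYdef : RY = (Measure.pi fun t : Fin (T + 1) => R t).map
      (fun hs => fun y : (s : Fin (T + 1)) → ↥(Yset s) => ∏ t : Fin (T + 1), hs t (y t)))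
    (hprodm : Measurable fun hs : (t : Fin (T + 1)) → (↥(Yset t) → ℝ) =>
      fun y : (s : Fin (T + 1)) → ↥(Yset s) => ∏ t : Fin (T + 1), hs t (y t))
    -- its pullback `O* R_{0:T}` by `O = O_0 × ⋯ × O_T`
    (ORT : Measure ((((s : Fin (T + 1)) → ↥(Xset s)) → ℝ)))
    (hORTdef : ORT = RY.map
      (fun h : ((s : Fin (T + 1)) → ↥(Yset s)) → ℝ =>
        fun x : (s : Fin (T + 1)) → ↥(Xset s) => h (fun t => O t (x t))))
    (hpullm : Measurable fun h : ((s : Fin (T + 1)) → ↥(Yset s)) → ℝ =>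
      fun x : (s : Fin (T + 1)) → ↥(Xset s) => h (fun t => O t (x t)))
    -- the function `u_{0:T|T}` and the normalising constant `Z`
    (u : ((↥(Xset 0)) → ℝ) → ((t : Fin (T + 1)) → (↥(Yset t) → ℝ)) →
      ((s : Fin (T + 1)) → ↥(Xset s)) → ℝ)
    (hudef : ∀ f0 hs x, u f0 hs x =
      f0 (x ⟨0, T.succ_pos⟩) * (∏ t : Fin T, g t (x t.castSucc) (x t.succ)) *
        ∏ t : Fin (T + 1), hs t (O t (x t)))
    (Z : ℝ)
    (hZdef : Z = ∫ f0, ∫ hs, (⨆ x, u f0 hs x)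
      ∂(Measure.pi fun t : Fin (T + 1) => R t) ∂P0)
    (hZ : 0 < Z)
    -- the fusion `P_{0:T} ⋆ (O* R_{0:T})` and its induced (smoothed) outer measure
    (hsupm : Measurable fun q : ((((s : Fin (T + 1)) → ↥(Xset s)) → ℝ)) ×
        ((((s : Fin (T + 1)) → ↥(Xset s)) → ℝ)) => ⨆ x, q.1 x * q.2 x)
    (hnormm : Measurable fun q : ((((s : Fin (T + 1)) → ↥(Xset s)) → ℝ)) ×
        ((((s : Fin (T + 1)) → ↥(Xset s)) → ℝ)) =>
      fun x => (q.1 x * q.2 x) / ⨆ x', q.1 x' * q.2 x')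
    (fuse : Measure ((((s : Fin (T + 1)) → ↥(Xset s)) → ℝ)))
    (hfusedef : fuse =
      (ENNReal.ofReal (∫ q, (⨆ x, q.1 x * q.2 x) ∂(P0T.prod ORT)))⁻¹ •
        ((P0T.prod ORT).withDensity fun q => ENNReal.ofReal (⨆ x, q.1 x * q.2 x)).map
          (fun q => fun x => (q.1 x * q.2 x) / ⨆ x', q.1 x' * q.2 x'))
    -- the test function `φ ∈ L^∞(X_0 × ⋯ × X_T)`
    (φ : ((s : Fin (T + 1)) → ↥(Xset s)) → ℝ) (hφm : Measurable φ)
    (hφ0 : ∀ x, 0 ≤ φ x) (hφb : ∃ C, ∀ x, φ x ≤ C)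
    (hφsupm : Measurable fun gg : (((s : Fin (T + 1)) → ↥(Xset s)) → ℝ) =>
      ⨆ x, φ x * gg x)
    (hφum : ∀ f0, Measurable fun hs : (t : Fin (T + 1)) → (↥(Yset t) → ℝ) =>
      ⨆ x, φ x * u f0 hs x) :
    ∫ gg, (⨆ x, φ x * gg x) ∂fuse =
      Z⁻¹ * ∫ f0, ∫ hs, (⨆ x, φ x * u f0 hs x)
        ∂(Measure.pi fun t : Fin (T + 1) => R t) ∂P0 := by
    classical
  -- the path space is nonempty (otherwise `Z = 0`)
  have hne : Nonempty ((s : Fin (T + 1)) → ↥(Xset s)) := by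
    by_contra h
    rw [not_nonempty_iff] at h
    have h0 : ∀ (f0 : (↥(Xset 0)) → ℝ) (hs : (t : Fin (T + 1)) → (↥(Yset t) → ℝ)),
        (⨆ x, u f0 hs x) = (0 : ℝ) := by
      intro f0 hs
      rw [iSup, Set.range_eq_empty, Real.sSup_empty]
    have hZ0 : Z = 0 := by
      rw [hZdef]
      simp only [h0, integral_zero]
    exact absurd hZ0 (ne_of_gt hZ)
  haveI := hne
  haveI hRpi : ∀ i : Fin (T + 1), IsProbabilityMeasure (R (i : ℕ)) := fun i => inferInstance
  haveI hRfin : ∀ i : Fin (T + 1), IsFiniteMeasure (R (i : ℕ)) :=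
    fun i => ⟨by rw [(hRpi i).measure_univ]; exact ENNReal.one_lt_top⟩
  haveI hRsf : ∀ i : Fin (T + 1), SigmaFinite (R (i : ℕ)) :=
    fun i => MeasureTheory.IsFiniteMeasure.toSigmaFinite _
  set_option synthInstance.maxHeartbeats 2000000 in
  set_option maxHeartbeats 4000000 in
  haveI hpiP : IsProbabilityMeasure (Measure.pi fun t : Fin (T + 1) => R t) := inferInstance
  haveI hpiFin : IsFiniteMeasure (Measure.pi fun t : Fin (T + 1) => R t) :=
    ⟨by rw [hpiP.measure_univ]; exact ENNReal.one_lt_top⟩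
  haveI hpiSig : SigmaFinite (Measure.pi fun t : Fin (T + 1) => R t) :=
    MeasureTheory.IsFiniteMeasure.toSigmaFinite _
  set_option synthInstance.maxHeartbeats 2000000 in
  set_option maxHeartbeats 4000000 in
  haveI hpiSF : SFinite (Measure.pi fun t : Fin (T + 1) => R t) := inferInstance
  haveI hP0fin : IsFiniteMeasure P0 := inferInstance
  haveI hP0sig : SigmaFinite P0 := MeasureTheory.IsFiniteMeasure.toSigmaFinite _
  set_option synthInstance.maxHeartbeats 2000000 in
  set_option maxHeartbeats 4000000 in
  haveI hP0sf : SFinite P0 := inferInstance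
  obtain ⟨C, hC⟩ := hφb
  have hC0 : 0 ≤ C := le_trans (hφ0 (Classical.arbitrary _)) (hC _)
  -- the pullback-of-product map `Φ`
  set Φ : ((t : Fin (T + 1)) → (↥(Yset t) → ℝ)) → (((s : Fin (T + 1)) → ↥(Xset s)) → ℝ) :=
    fun hs => fun x => ∏ t : Fin (T + 1), hs t (O t (x t)) with hΦdef
  have hΦm : Measurable Φ := by
    rw [hΦdef]; exact hpullm.comp hprodm
  set Θ := Prod.map ζ Φ with hΘdef
  have hΘm : Measurable Θ := hζm.prodMap hΦm
  set M := P0.prod (Measure.pi fun t : Fin (T + 1) => R t) with hMdef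
  -- the product measure is the push-forward of `M` under `Θ`
  have claim1 : P0T.prod ORT = M.map Θ := by
    rw [hMdef, hΘdef, hP0Tdef, hORTdef, hRYdef, Measure.map_map hpullm hprodm]
    exact Measure.map_prod_map _ _ hζm hΦm
  -- pointwise identification of the fused possibility with `u`
  have hveq : ∀ (f0 : (↥(Xset 0)) → ℝ) (hs : (t : Fin (T + 1)) → (↥(Yset t) → ℝ))
      (x : (s : Fin (T + 1)) → ↥(Xset s)), ζ f0 x * Φ hs x = u f0 hs x := by
    intro f0 hs x
    rw [hudef, hζdef, hΦdef]
  -- almost every pair consists of possibility functions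
  have hMposs : ∀ᵐ p ∂M, IsPossibility p.1 ∧ ∀ t, IsPossibility (p.2 t) := by
    have h1 : ∀ᵐ p ∂M, IsPossibility p.1 :=
      Measure.quasiMeasurePreserving_fst.ae hP0
    have hpi : ∀ᵐ hs ∂(Measure.pi fun t : Fin (T + 1) => R t), ∀ t, IsPossibility (hs t) :=
      Filter.Eventually.filter_mono MeasureTheory.Measure.ae_pi_le_pi
        (Filter.eventually_pi fun t => hR t)
    have h2 : ∀ᵐ p ∂M, ∀ t, IsPossibility (p.2 t) :=
      Measure.quasiMeasurePreserving_snd.ae hpi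
    exact h1.and h2
  -- `u f0 hs` takes values in `[0,1]` for possibilities
  have huIcc : ∀ (f0 : (↥(Xset 0)) → ℝ) (hs : (t : Fin (T + 1)) → (↥(Yset t) → ℝ)),
      IsPossibility f0 → (∀ t, IsPossibility (hs t)) →
      ∀ x, u f0 hs x ∈ Set.Icc (0 : ℝ) 1 := by
    intro f0 hs hf0 hhs x
    rw [hudef]
    have h1 : f0 (x ⟨0, T.succ_pos⟩) ∈ Set.Icc (0 : ℝ) 1 := hf0.2.1 _
    have h2 : (0 : ℝ) ≤ ∏ t : Fin T, g t (x t.castSucc) (x t.succ) :=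
      Finset.prod_nonneg fun t _ => (hg01 t t.isLt _ _).1
    have h2' : (∏ t : Fin T, g t (x t.castSucc) (x t.succ)) ≤ 1 :=
      Finset.prod_le_one (fun t _ => (hg01 t t.isLt _ _).1)
        (fun t _ => (hg01 t t.isLt _ _).2)
    have h3 : (0 : ℝ) ≤ ∏ t : Fin (T + 1), hs t (O t (x t)) :=
      Finset.prod_nonneg fun t _ => ((hhs t).2.1 _).1
    have h3' : (∏ t : Fin (T + 1), hs t (O t (x t))) ≤ 1 :=
      Finset.prod_le_one (fun t _ => ((hhs t).2.1 _).1) (fun t _ => ((hhs t).2.1 _).2)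
    constructor
    · exact mul_nonneg (mul_nonneg h1.1 h2) h3
    · calc f0 (x ⟨0, T.succ_pos⟩) * (∏ t : Fin T, g t (x t.castSucc) (x t.succ)) *
            ∏ t : Fin (T + 1), hs t (O t (x t))
          ≤ 1 * 1 * 1 := by
            apply mul_le_mul (mul_le_mul h1.2 h2' h2 zero_le_one) h3' h3
            norm_num
        _ = 1 := by norm_num
  -- identification of suprema
  have hG1eq : ∀ p : ((↥(Xset 0)) → ℝ) × ((t : Fin (T + 1)) → (↥(Yset t) → ℝ)),
      (⨆ x, (Θ p).1 x * (Θ p).2 x) = ⨆ x, u p.1 p.2 x := by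
    intro p
    simp only [hΘdef, Prod.map_fst, Prod.map_snd]
    exact iSup_congr fun x => hveq p.1 p.2 x
  -- measurability of the two suprema as functions of `p`
  have hG1m : Measurable (fun p : ((↥(Xset 0)) → ℝ) × ((t : Fin (T + 1)) → (↥(Yset t) → ℝ)) =>
      ⨆ x, u p.1 p.2 x) := by
    have he : (fun p : ((↥(Xset 0)) → ℝ) × ((t : Fin (T + 1)) → (↥(Yset t) → ℝ)) =>
        ⨆ x, u p.1 p.2 x)
        = (fun q : (((s : Fin (T + 1)) → ↥(Xset s)) → ℝ) ×
            (((s : Fin (T + 1)) → ↥(Xset s)) → ℝ) => ⨆ x, q.1 x * q.2 x) ∘ Θ := by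
      funext p
      exact (hG1eq p).symm
    rw [he]
    exact hsupm.comp hΘm
  have hmulm : Measurable (fun q : (((s : Fin (T + 1)) → ↥(Xset s)) → ℝ) ×
      (((s : Fin (T + 1)) → ↥(Xset s)) → ℝ) => fun x => q.1 x * q.2 x) :=
    measurable_pi_lambda _ fun x =>
      ((measurable_pi_apply x).comp measurable_fst).mul
        ((measurable_pi_apply x).comp measurable_snd)
  have hG2m : Measurable (fun p : ((↥(Xset 0)) → ℝ) × ((t : Fin (T + 1)) → (↥(Yset t) → ℝ)) =>
      ⨆ x, φ x * u p.1 p.2 x) := by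
    have he : (fun p : ((↥(Xset 0)) → ℝ) × ((t : Fin (T + 1)) → (↥(Yset t) → ℝ)) =>
        ⨆ x, φ x * u p.1 p.2 x)
        = (fun gg : (((s : Fin (T + 1)) → ↥(Xset s)) → ℝ) => ⨆ x, φ x * gg x)
          ∘ (fun q : (((s : Fin (T + 1)) → ↥(Xset s)) → ℝ) ×
            (((s : Fin (T + 1)) → ↥(Xset s)) → ℝ) => fun x => q.1 x * q.2 x) ∘ Θ := by
      funext p
      simp only [Function.comp_apply, hΘdef, Prod.map_fst, Prod.map_snd]
      exact iSup_congr fun x => by rw [← hveq p.1 p.2 x]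
    rw [he]
    exact hφsupm.comp (hmulm.comp hΘm)
  -- a.e. bounds
  have hbnd : ∀ᵐ p ∂M, ∀ x, u p.1 p.2 x ∈ Set.Icc (0 : ℝ) 1 := by
    filter_upwards [hMposs] with p hp
    exact huIcc p.1 p.2 hp.1 hp.2
  -- integrability
  have hint1 : Integrable (fun p : ((↥(Xset 0)) → ℝ) ×
      ((t : Fin (T + 1)) → (↥(Yset t) → ℝ)) => ⨆ x, u p.1 p.2 x) M := by
    apply Integrable.mono' (integrable_const (1 : ℝ)) hG1m.aestronglyMeasurable
    filter_upwards [hbnd] with p hp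
    rw [Real.norm_eq_abs, abs_le]
    constructor
    · linarith [Real.iSup_nonneg fun x => (hp x).1]
    · exact Real.iSup_le (fun x => (hp x).2) zero_le_one
  have hint2 : Integrable (fun p : ((↥(Xset 0)) → ℝ) ×
      ((t : Fin (T + 1)) → (↥(Yset t) → ℝ)) => ⨆ x, φ x * u p.1 p.2 x) M := by
    apply Integrable.mono' (integrable_const C) hG2m.aestronglyMeasurable
    filter_upwards [hbnd] with p hp
    rw [Real.norm_eq_abs, abs_le]
    constructor
    · linarith [Real.iSup_nonneg fun x => mul_nonneg (hφ0 x) (hp x).1]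
    · refine Real.iSup_le (fun x => ?_) hC0
      calc φ x * u p.1 p.2 x ≤ φ x * 1 :=
            mul_le_mul_of_nonneg_left (hp x).2 (hφ0 x)
        _ = φ x := mul_one _
        _ ≤ C := hC x
  -- Fubini identifications
  have hZ2 : ∫ p, (⨆ x, u p.1 p.2 x) ∂M = Z := by
    rw [hZdef, hMdef]
    exact integral_prod _ (by rw [← hMdef]; exact hint1)
  have hφint : ∫ p, (⨆ x, φ x * u p.1 p.2 x) ∂M
      = ∫ f0, ∫ hs, (⨆ x, φ x * u f0 hs x)
          ∂(Measure.pi fun t : Fin (T + 1) => R t) ∂P0 := by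
    rw [hMdef]
    exact integral_prod _ (by rw [← hMdef]; exact hint2)
  -- the normalising constant of the fusion equals `Z`
  have hc : (∫ q, (⨆ x, q.1 x * q.2 x) ∂(P0T.prod ORT)) = Z := by
    rw [claim1, integral_map hΘm.aemeasurable hsupm.aestronglyMeasurable, ← hZ2]
    exact integral_congr_ae (Filter.Eventually.of_forall fun p => hG1eq p)
  -- unfold the fusion measure
  rw [hfusedef, hc, integral_smul_measure,
    integral_map hnormm.aemeasurable hφsupm.aestronglyMeasurable]
  have hscal : ((ENNReal.ofReal Z)⁻¹).toReal = Z⁻¹ := by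
    rw [ENNReal.toReal_inv, ENNReal.toReal_ofReal hZ.le]
  rw [hscal, smul_eq_mul]
  congr 1
  -- remove the density
  have hdens : (fun q : (((s : Fin (T + 1)) → ↥(Xset s)) → ℝ) ×
      (((s : Fin (T + 1)) → ↥(Xset s)) → ℝ) => ENNReal.ofReal (⨆ x, q.1 x * q.2 x))
      = fun q => (((⨆ x, q.1 x * q.2 x).toNNReal : ℝ≥0) : ℝ≥0∞) := rfl
  rw [hdens, integral_withDensity_eq_integral_smul hsupm.real_toNNReal]
  simp only [NNReal.smul_def, Real.coe_toNNReal']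
  have hmeas2 : Measurable (fun q : (((s : Fin (T + 1)) → ↥(Xset s)) → ℝ) ×
      (((s : Fin (T + 1)) → ↥(Xset s)) → ℝ) =>
      max (⨆ x, q.1 x * q.2 x) 0 *
        ⨆ x, φ x * (q.1 x * q.2 x / ⨆ x', q.1 x' * q.2 x')) :=
    (hsupm.max measurable_const).mul (hφsupm.comp hnormm)
  rw [claim1]
  refine Eq.trans (integral_map hΘm.aemeasurable hmeas2.aestronglyMeasurable) ?_
  rw [← hφint]
  apply integral_congr_ae
  filter_upwards [hMposs] with p hp
  have hu : ∀ x, u p.1 p.2 x ∈ Set.Icc (0 : ℝ) 1 := huIcc p.1 p.2 hp.1 hp.2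
  simp only [hΘdef, Prod.map_fst, Prod.map_snd]
  have hrw1 : (⨆ x, ζ p.1 x * Φ p.2 x) = ⨆ x, u p.1 p.2 x :=
    iSup_congr fun x => hveq p.1 p.2 x
  calc max (⨆ x, ζ p.1 x * Φ p.2 x) 0 *
        ⨆ x, φ x * (ζ p.1 x * Φ p.2 x / ⨆ x', ζ p.1 x' * Φ p.2 x')
      = max (⨆ x, u p.1 p.2 x) 0 *
        ⨆ x, φ x * (u p.1 p.2 x / ⨆ x', u p.1 p.2 x') := by
        rw [hrw1]
        congr 1
        exact iSup_congr fun x => by rw [hveq p.1 p.2 x]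
    _ = ⨆ x, φ x * u p.1 p.2 x := sup_identity_aux φ _ hφ0 hu
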